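/- (Exponential convergence to the stable fixed point) Fix constants 0 < σ, η < 1/2 and α ∈ ℝ with 1 + σ ≤ |α| ≤ η⁻¹. Let β = min{1/2, α² − 1} and consider a solution Ψ of the ODE dΨ/dR = −Ψ(Ψ − α)(Ψ − α⁻¹) + F(R) with |F(R)| ≤ e^{−R}. Then there exists ν₀ = ν₀(σ, η) > 0 such that whenever |ν| < ν₀ and R* satisfies both |Ψ(R*) − α| ≤ ν² and e^{−R*} ≤ ν², one has |Ψ(R) − α| ≤ 8ν² e^{−β(R − R*)} for all R ≥ R*. -/

import Mathlib

open Set Real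

set_option maxHeartbeats 2000000

/-- Exponential convergence to the stable fixed point: for
`1 + σ ≤ |α| ≤ η⁻¹` and `β = min{1/2, α² − 1}`, any solution of
`dΨ/dR = −Ψ(Ψ − α)(Ψ − α⁻¹) + F` with `|F(R)| ≤ e^{−R}`, starting `ν²`-close
to `α` at some `R₀` with `e^{−R₀} ≤ ν²` (and `|ν| < ν₀(σ,η)`), satisfies
`|Ψ(R) − α| ≤ 8ν² e^{−β(R−R₀)}` for all `R ≥ R₀`. -/
theorem stmt_13 (σ η : ℝ) (hσ : 0 < σ) (hσ' : σ < 1 / 2)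
    (hη : 0 < η) (hη' : η < 1 / 2) :
    ∃ ν₀ > (0 : ℝ), ∀ α : ℝ, 1 + σ ≤ |α| → |α| ≤ η⁻¹ →
      ∀ ν R₀ : ℝ, |ν| < ν₀ →
      ∀ Ψ F : ℝ → ℝ,
        (∀ R, R₀ ≤ R → HasDerivAt Ψ (-Ψ R * (Ψ R - α) * (Ψ R - α⁻¹) + F R) R) →
        (∀ R, R₀ ≤ R → |F R| ≤ Real.exp (-R)) →
        |Ψ R₀ - α| ≤ ν ^ 2 → Real.exp (-R₀) ≤ ν ^ 2 →
        ∀ R, R₀ ≤ R →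
          |Ψ R - α| ≤ 8 * ν ^ 2 * Real.exp (-(min (1 / 2) (α ^ 2 - 1)) * (R - R₀)) := by
  set C : ℝ := 2 / η + 1 with hCdef
  have hC1 : 1 ≤ C := by
    have h : 0 < 2 / η := by positivity
    rw [hCdef]; linarith only [h]
  clear_value C
  have hC0 : 0 < C := by linarith only [hC1]
  have hmin0 : 0 < min (1/2 : ℝ) (2*σ) := lt_min (by norm_num) (by linarith only [hσ])
  have hq0 : 0 < 3 * min (1/2 : ℝ) (2*σ) / (64 * C) :=
    div_pos (by linarith only [hmin0]) (by linarith only [hC0])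
  refine ⟨Real.sqrt (3 * min (1/2) (2*σ) / (64 * C)), Real.sqrt_pos.2 hq0, ?_⟩
  intro α hα1 hα2 ν R₀ hν Ψ F hΨ hF h0 hR0 R hR
  set β : ℝ := min (1/2 : ℝ) (α^2 - 1) with hβdef
  clear_value β
  have habs1 : (1 : ℝ) < |α| := by linarith only [hα1, hσ]
  have hα0 : α ≠ 0 := by
    intro h; rw [h] at habs1; simp at habs1; linarith only [habs1]
  have hαinv : α * α⁻¹ = 1 := mul_inv_cancel₀ hα0
  have hαsq : (1 + σ)^2 ≤ α^2 := by
    have h := sq_abs α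
    nlinarith only [hα1, hσ, h, abs_nonneg α]
  have hβ3 : β ≤ α^2 - 1 := by rw [hβdef]; exact min_le_right _ _
  have hβ2 : β ≤ 1/2 := by rw [hβdef]; exact min_le_left _ _
  have hσα : (2*σ : ℝ) ≤ α^2 - 1 := by nlinarith only [hαsq, hσ]
  have hβ4 : min (1/2 : ℝ) (2*σ) ≤ β := by
    rw [hβdef]; exact le_min (min_le_left _ _) ((min_le_right _ _).trans hσα)
  have hβ0 : 0 < β := lt_of_lt_of_le hmin0 hβ4
  have hν2 : 0 < ν^2 := lt_of_lt_of_le (Real.exp_pos _) hR0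
  -- smallness of ν
  have hνsq : 64 * C * ν^2 < 3 * β := by
    have h1 : ν^2 < 3 * min (1/2 : ℝ) (2*σ) / (64 * C) := by
      rw [← Real.sq_sqrt hq0.le, ← sq_abs ν]
      exact pow_lt_pow_left₀ hν (abs_nonneg ν) two_ne_zero
    have h4 : ν^2 * (64 * C) < 3 * min (1/2 : ℝ) (2*σ) :=
      (lt_div_iff₀ (by linarith only [hC0])).1 h1
    linarith only [h4, hβ4]
  -- the constant K and the barrier function B
  set K : ℝ := 64 * C * ν^2 * ν^2 / β with hKdef
  have hβK : β * K = 64 * C * ν^2 * ν^2 := by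
    rw [hKdef]; field_simp
  clear_value K
  have hK0 : 0 ≤ K := by
    rw [hKdef]; positivity
  have hK3 : K < 3 * ν^2 := by
    have h1 : (64 * C * ν^2) * ν^2 < (3 * β) * ν^2 :=
      mul_lt_mul_of_pos_right hνsq hν2
    nlinarith only [h1, hβK, hβ0]
  set B : ℝ → ℝ := fun x =>
    (5*ν^2 + K) * Real.exp (-β*(x - R₀)) - K * (Real.exp (-β*(x - R₀)))^2
      - 3*ν^2 * Real.exp (-(x - R₀)) with hBdef
  set B' : ℝ → ℝ := fun x =>
    (5*ν^2 + K) * (-β * Real.exp (-β*(x - R₀)))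
      - K * (2 * Real.exp (-β*(x - R₀)) * (-β * Real.exp (-β*(x - R₀))))
      - 3*ν^2 * (-Real.exp (-(x - R₀))) with hB'def
  have hBderiv : ∀ x : ℝ, HasDerivAt B (B' x) x := by
    intro x
    have h1 : HasDerivAt (fun y : ℝ => -β*(y - R₀)) (-β) x := by
      simpa using ((hasDerivAt_id x).sub_const R₀).const_mul (-β)
    have h2 : HasDerivAt (fun y : ℝ => Real.exp (-β*(y - R₀)))
        (-β * Real.exp (-β*(x - R₀))) x := by
      simpa [mul_comm] using h1.exp
    have h3 : HasDerivAt (fun y : ℝ => -(y - R₀)) (-1 : ℝ) x := by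
      simpa using ((hasDerivAt_id x).sub_const R₀).fun_neg
    have h4 : HasDerivAt (fun y : ℝ => Real.exp (-(y - R₀)))
        (-Real.exp (-(x - R₀))) x := by
      simpa using h3.exp
    have h5 : HasDerivAt (fun y : ℝ => (Real.exp (-β*(y - R₀)))^2)
        (2 * Real.exp (-β*(x - R₀)) * (-β * Real.exp (-β*(x - R₀)))) x := by
      have := h2.fun_pow 2
      simpa [pow_one, mul_comm, mul_assoc, mul_left_comm] using this
    simpa [hBdef, hB'def] using
      (((h2.const_mul (5*ν^2 + K)).fun_sub (h5.const_mul K)).fun_sub (h4.const_mul (3*ν^2)))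
  clear_value B B'
  -- basic bounds on B for x ≥ R₀
  have hexp_le : ∀ x : ℝ, R₀ ≤ x →
      Real.exp (-(x - R₀)) ≤ Real.exp (-β*(x - R₀)) := by
    intro x hx
    apply Real.exp_le_exp.2
    have h := mul_nonneg (by linarith only [hβ2] : (0:ℝ) ≤ 1 - β)
      (by linarith only [hx] : (0:ℝ) ≤ x - R₀)
    nlinarith only [h]
  have hexp1 : ∀ x : ℝ, R₀ ≤ x → Real.exp (-β*(x - R₀)) ≤ 1 := by
    intro x hx
    apply Real.exp_le_one_iff.2
    have h := mul_nonneg hβ0.le (by linarith only [hx] : (0:ℝ) ≤ x - R₀)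
    nlinarith only [h]
  have hBpos : ∀ x : ℝ, R₀ ≤ x → 0 < B x := by
    intro x hx
    have hb := Real.exp_pos (-β*(x - R₀))
    have he := Real.exp_pos (-(x - R₀))
    have h1 := hexp_le x hx
    have h2 := hexp1 x hx
    simp only [hBdef]
    have hkb : 0 ≤ K * Real.exp (-β*(x - R₀)) * (1 - Real.exp (-β*(x - R₀))) :=
      mul_nonneg (mul_nonneg hK0 hb.le) (by linarith only [h2])
    have hbe : 0 ≤ ν^2 * (Real.exp (-β*(x - R₀)) - Real.exp (-(x - R₀))) :=
      mul_nonneg hν2.le (by linarith only [h1])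
    have hvb : 0 < ν^2 * Real.exp (-β*(x - R₀)) := mul_pos hν2 hb
    nlinarith only [hkb, hbe, hvb]
  have hB8 : ∀ x : ℝ, R₀ ≤ x → B x ≤ 8*ν^2 * Real.exp (-β*(x - R₀)) := by
    intro x hx
    have hb := Real.exp_pos (-β*(x - R₀))
    have he := Real.exp_pos (-(x - R₀))
    simp only [hBdef]
    have h1 : 0 ≤ (3*ν^2 - K) * Real.exp (-β*(x - R₀)) :=
      mul_nonneg (by linarith only [hK3]) hb.le
    have h2 : 0 ≤ K * (Real.exp (-β*(x - R₀)))^2 :=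
      mul_nonneg hK0 (sq_nonneg _)
    have h3 : 0 ≤ 3*ν^2 * Real.exp (-(x - R₀)) :=
      mul_nonneg (by linarith only [hν2]) he.le
    nlinarith only [h1, h2, h3]
  have hBR₀ : ν^2 ≤ B R₀ := by
    simp only [hBdef, sub_self, mul_zero, neg_zero, Real.exp_zero]
    norm_num
    linarith only [hν2]
  -- the key contact estimate
  have key : ∀ x : ℝ, R₀ ≤ x → ∀ s : ℝ, (s = 1 ∨ s = -1) →
      s * (Ψ x - α) = B x →
      s * (-Ψ x * (Ψ x - α) * (Ψ x - α⁻¹) + F x) < B' x := by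
    intro x hx s hs hc
    have hs2 : s^2 = 1 := by rcases hs with rfl | rfl <;> norm_num
    have habs_s : |s| = 1 := by rcases hs with rfl | rfl <;> norm_num
    have hBx := hBpos x hx
    have hφ : Ψ x - α = s * B x := by
      calc Ψ x - α = s^2 * (Ψ x - α) := by rw [hs2]; ring
      _ = s * (s * (Ψ x - α)) := by ring
      _ = s * B x := by rw [hc]
    -- bound on s * F x
    have hsF : s * F x ≤ ν^2 * Real.exp (-(x - R₀)) := by
      have h1 : s * F x ≤ |s * F x| := le_abs_self _
      have h2 : |s * F x| = |F x| := by rw [abs_mul, habs_s, one_mul]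
      have h3 : |F x| ≤ Real.exp (-x) := hF x hx
      have h4 : Real.exp (-x) = Real.exp (-R₀) * Real.exp (-(x - R₀)) := by
        rw [← Real.exp_add]; ring_nf
      have h5 : Real.exp (-R₀) * Real.exp (-(x - R₀)) ≤ ν^2 * Real.exp (-(x - R₀)) :=
        mul_le_mul_of_nonneg_right hR0 (Real.exp_pos _).le
      rw [h2] at h1
      rw [h4] at h3
      linarith only [h1, h3, h5]
    -- lower bound on the cubic coefficient
    have h2α : |2*α - α⁻¹| ≤ C := by
      have h1 : |2*α - α⁻¹| ≤ |2*α| + |α⁻¹| := abs_sub _ _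
      have h2 : |2*α| = 2 * |α| := by rw [abs_mul]; norm_num
      have h3 : |α⁻¹| = |α|⁻¹ := abs_inv α
      have h4 : |α|⁻¹ ≤ 1 := by
        rw [inv_le_one_iff₀]; right; linarith only [habs1]
      have h5 : 2 * |α| ≤ 2 / η := by
        rw [div_eq_mul_inv]; linarith only [hα2]
      calc |2*α - α⁻¹| ≤ |2*α| + |α⁻¹| := h1
        _ = 2*|α| + |α|⁻¹ := by rw [h2, h3]
        _ ≤ 2/η + 1 := by linarith only [h4, h5]
        _ = C := hCdef.symm
    have hc_lb : β - C * B x ≤ Ψ x * (Ψ x - α⁻¹) := by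
      have hΨx : Ψ x = α + s * B x := by linarith only [hφ]
      rw [hΨx]
      have habsB : |s * B x| = B x := by
        rw [abs_mul, habs_s, one_mul, abs_of_pos hBx]
      have hbd : |(s * B x) * (2*α - α⁻¹)| ≤ B x * C := by
        rw [abs_mul, habsB]
        exact mul_le_mul_of_nonneg_left h2α hBx.le
      have hd : -(B x * C) ≤ (s * B x) * (2*α - α⁻¹) :=
        (neg_le_neg hbd).trans (neg_abs_le _)
      nlinarith only [hd, sq_nonneg (s * B x), hαinv, hβ3]
    -- put the pieces together
    have e1 : s * (-Ψ x * (Ψ x - α) * (Ψ x - α⁻¹) + F x)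
        = -(Ψ x * (Ψ x - α⁻¹)) * (s * (Ψ x - α)) + s * F x := by ring
    rw [e1, hc]
    have hstep : -(Ψ x * (Ψ x - α⁻¹)) * B x ≤ -β * B x + C * (B x)^2 := by
      linarith only [mul_le_mul_of_nonneg_right hc_lb hBx.le]
    -- final polynomial inequality
    have h1 : B x ≤ 8*ν^2 * Real.exp (-β*(x - R₀)) := hB8 x hx
    set b : ℝ := Real.exp (-β*(x - R₀)) with hbdef
    set ee : ℝ := Real.exp (-(x - R₀)) with heedef
    have hBexp : B x = (5*ν^2 + K) * b - K * b^2 - 3*ν^2 * ee := by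
      simp only [hBdef, hbdef, heedef]
    have hB'exp : B' x = -β * ((5*ν^2 + K) * b - K * b^2 - 3*ν^2*ee)
        + β * K * b^2 + 3*(1 - β)*ν^2*ee := by
      simp only [hB'def, hbdef, heedef]; ring
    have hb0 : 0 < b := by rw [hbdef]; exact Real.exp_pos _
    have he0 : 0 < ee := by rw [heedef]; exact Real.exp_pos _
    clear_value b ee
    have hCB2 : C * (B x)^2 ≤ β * K * b^2 := by
      have h2 : (B x)^2 ≤ (8*ν^2 * b)^2 := pow_le_pow_left₀ (hBpos x hx).le h1 2
      calc C * (B x)^2 ≤ C * (8*ν^2*b)^2 := mul_le_mul_of_nonneg_left h2 hC0.le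
        _ = (64 * C * ν^2 * ν^2) * b^2 := by ring
        _ = β * K * b^2 := by rw [hβK]
    have hvee : 0 < ν^2 * ee := mul_pos hν2 he0
    have h3 : ν^2 * ee < 3*(1 - β)*ν^2*ee := by
      have h4 : β * (ν^2 * ee) ≤ (1/2) * (ν^2 * ee) :=
        mul_le_mul_of_nonneg_right hβ2 hvee.le
      nlinarith only [h4, hvee]
    calc -(Ψ x * (Ψ x - α⁻¹)) * B x + s * F x
        ≤ -β * B x + C * (B x)^2 + ν^2 * ee := by linarith only [hstep, hsF]
      _ ≤ -β * B x + β * K * b^2 + ν^2 * ee := by linarith only [hCB2]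
      _ < -β * B x + β * K * b^2 + 3*(1 - β)*ν^2*ee := by linarith only [h3]
      _ = B' x := by rw [hB'exp, hBexp]
  -- apply the fencing theorem for both signs
  have hcont : ContinuousOn Ψ (Icc R₀ R) := fun x hx =>
    (hΨ x hx.1).continuousAt.continuousWithinAt
  have h₁ : ∀ ⦃x⦄, x ∈ Icc R₀ R → Ψ x - α ≤ B x := by
    apply image_le_of_deriv_right_lt_deriv_boundary
      (f' := fun x => -Ψ x * (Ψ x - α) * (Ψ x - α⁻¹) + F x)
      (hcont.sub continuousOn_const)
      (fun x hx => ((hΨ x hx.1).sub_const α).hasDerivWithinAt)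
      (le_trans (le_trans (le_abs_self _) h0) hBR₀)
      hBderiv
    intro x hx hcx
    have := key x hx.1 1 (Or.inl rfl) (by simpa using hcx)
    simpa using this
  have h₂ : ∀ ⦃x⦄, x ∈ Icc R₀ R → α - Ψ x ≤ B x := by
    apply image_le_of_deriv_right_lt_deriv_boundary
      (f' := fun x => -(-Ψ x * (Ψ x - α) * (Ψ x - α⁻¹) + F x))
      (continuousOn_const.sub hcont)
      (fun x hx => ((hΨ x hx.1).const_sub α).hasDerivWithinAt)
      (le_trans (by linarith only [(abs_le.1 h0).1] : α - Ψ R₀ ≤ ν^2) hBR₀)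
      hBderiv
    intro x hx hcx
    have hc' : (-1 : ℝ) * (Ψ x - α) = B x := by
      simp only [Pi.sub_apply] at hcx; linarith only [hcx]
    have := key x hx.1 (-1) (Or.inr rfl) hc'
    linarith only [this]
  have hmem : R ∈ Icc R₀ R := ⟨hR, le_refl R⟩
  have habsle : |Ψ R - α| ≤ B R :=
    abs_le.2 ⟨by linarith only [h₂ hmem], h₁ hmem⟩
  exact habsle.trans (hB8 R hR)
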